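/- There exist constants C > 0 and M > 0 such that for all α, δ > 0 with δ·α ≥ M the following holds: if k > 0 satisfies k·cosh(δk) = α·sinh(δk) and ψ(t) = C₀·(e^{k(t−δ)} − e^{−k(t−δ)}) with C₀ > 0 chosen so that ∫₀^δ ψ(t)² dt = 1, then |ψ(0)² − 2α| ≤ C·α·e^{−δα}. -/

import Mathlib

set_option maxHeartbeats 2000000 in
lemma robin_aux (α δ k C₀ s c : ℝ) (hα : 0 < α) (hδ : 0 < δ) (hM : 5 ≤ δ * α)
    (hk : 0 < k) (hs_pos : 0 < s) (hc1 : 1 ≤ c) (hxs : δ*k < s)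
    (hcs : c - s = Real.exp (-(δ*k))) (hcs2 : c + s = Real.exp (δ*k))
    (hsq : c^2 = s^2 + 1)
    (heig : k * c = α * s) (hC2 : C₀^2 * (4*(s*c) - 4*(δ*k)) = 2*k) :
    |(-(2*C₀*s))^2 - 2*α| ≤ 200 * α * Real.exp (-(δ * α)) := by
  have hx : 0 < δ * k := mul_pos hδ hk
  have hc_pos : (0:ℝ) < c := lt_of_lt_of_le one_pos hc1
  have hP : 0 < s*c - δ*k := by nlinarith
  have hA : (-(2*C₀*s))^2 * (s*c - δ*k) = 2*k*s^2 := by linear_combination s^2*hC2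
  have hαs : α * s = k * c := heig.symm
  have hPs : 0 < (s*c - δ*k) * s := mul_pos hP hs_pos
  have key : ((-(2*C₀*s))^2 - 2*α) * ((s*c - δ*k) * s) = 2*k*((δ*k)*c - s) := by
    linear_combination s*hA - 2*(s*c-δ*k)*hαs - 2*k*s*hsq
  have hexp1 : Real.exp (-(δ*k)) ≤ 1 := Real.exp_le_one_iff.mpr (by linarith)
  have hδα : δ * α ≤ δ*k + 1 := by
    have h1 : δ*α*s = (δ*k)*c := by linear_combination δ*hαs
    have h2 : (δ*k)*(c - s) ≤ s := by
      have h := mul_le_mul_of_nonneg_left hexp1 (le_of_lt hx)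
      rw [← hcs] at h
      nlinarith [h, hxs]
    have h3 : δ*α*s ≤ (δ*k+1)*s := by nlinarith [h1, h2]
    exact le_of_mul_le_mul_right (by linarith) hs_pos
  have hx4 : (4:ℝ) ≤ δ*k := by linarith
  have hscle : s < c := by nlinarith [Real.exp_pos (-(δ*k)), hcs]
  have hnum : 0 < (δ*k)*c - s := by nlinarith
  have hdiff : 0 ≤ (-(2*C₀*s))^2 - 2*α := by nlinarith [key, hPs, hnum, hk]
  rw [abs_of_nonneg hdiff]
  have hred : ((-(2*C₀*s))^2 - 2*α) * ((s*c - δ*k) * s) ≤ (200*α*Real.exp (-(δ*α))) * ((s*c - δ*k) * s) →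
      (-(2*C₀*s))^2 - 2*α ≤ 200*α*Real.exp (-(δ*α)) := fun h => le_of_mul_le_mul_right h hPs
  refine hred ?_
  rw [key]
  -- exponential bounds, E = c + s
  have hE_pos : (0:ℝ) < c + s := by linarith
  have hxE : δ*k + 1 ≤ c + s := by rw [hcs2]; exact Real.add_one_le_exp _
  have hE16 : (16:ℝ) ≤ c + s := by
    rw [hcs2]
    have h1 : Real.exp 4 ≤ Real.exp (δ*k) := Real.exp_le_exp.mpr hx4
    have h2 : Real.exp 4 = (Real.exp 1)^4 := by rw [← Real.exp_nat_mul]; norm_num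
    have h3 : (2:ℝ) ≤ Real.exp 1 := by nlinarith [Real.exp_one_gt_d9]
    have h4 : (2:ℝ)^4 ≤ (Real.exp 1)^4 := pow_le_pow_left₀ (by norm_num) h3 4
    norm_num at h4
    linarith [h1, h2.symm ▸ h4]
  have hEinv_pos : 0 < Real.exp (-(δ*k)) := Real.exp_pos _
  have hs_lb : c + s ≤ 4*s := by nlinarith [hcs, hE16, hexp1]
  have hc_lb : c + s ≤ 2*c := by linarith
  have h8 : (c+s)*(c+s) ≤ (4*s)*(2*c) := mul_le_mul hs_lb hc_lb (le_of_lt hE_pos) (by positivity)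
  have h16x : 16*(δ*k) ≤ (c+s)*(c+s) := by nlinarith [hxE, hE16, hE_pos]
  have hP_lb : (c+s)^2 ≤ 16*(s*c - δ*k) := by nlinarith [h8, h16x]
  have he : Real.exp 1 < 2.72 := by nlinarith [Real.exp_one_lt_d9]
  have he_pos : (0:ℝ) < Real.exp 1 := Real.exp_pos 1
  have hQ : Real.exp (-(δ*k+1)) * (Real.exp 1 * (c+s)) = 1 := by
    rw [hcs2, ← Real.exp_add, ← Real.exp_add,
      show -(δ*k+1) + (1 + δ*k) = 0 by ring, Real.exp_zero]
  have hQpos : 0 < Real.exp (-(δ*k+1)) := Real.exp_pos _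
  have main : 2*((δ*k)*c - s) ≤ 200*c*Real.exp (-(δ*k+1))*(s*c - δ*k) := by
    have h1 : 2*((δ*k)*c - s) ≤ 2*(δ*k)*c := by nlinarith [hs_pos]
    have hA1 : (δ*k)*(c*(c+s)) ≤ (c+s)*(c*(c+s)) := by
      refine mul_le_mul_of_nonneg_right (by linarith) (by positivity)
    have hA2 : c*(c+s)^2 ≤ c*(16*(s*c - δ*k)) := mul_le_mul_of_nonneg_left hP_lb (le_of_lt hc_pos)
    have hA3 : Real.exp 1 * (c*(c+s)^2) ≤ 2.72 * (16*(c*(s*c-δ*k))) := by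
      have hB0 := mul_le_mul_of_nonneg_left hA2 (le_of_lt he_pos)
      have hB0' := mul_le_mul_of_nonneg_right (le_of_lt he)
        (mul_nonneg (le_of_lt hc_pos) (by linarith : (0:ℝ) ≤ 16*(s*c - δ*k)))
      nlinarith [hB0, hB0']
    have h2 : 2*(δ*k)*c*(Real.exp 1 * (c+s)) ≤ 200*c*(s*c - δ*k) := by
      have hB1 := mul_le_mul_of_nonneg_left hA1 (by positivity : (0:ℝ) ≤ 2*Real.exp 1)
      have hB2 : 0 ≤ c*(s*c - δ*k) := mul_nonneg (le_of_lt hc_pos) (le_of_lt hP)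
      nlinarith [hB1, hA3, hB2]
    calc 2*((δ*k)*c - s) ≤ 2*(δ*k)*c := h1
      _ = 2*(δ*k)*c*(Real.exp (-(δ*k+1)) * (Real.exp 1 * (c+s))) := by rw [hQ]; ring
      _ = (2*(δ*k)*c*(Real.exp 1 * (c+s))) * Real.exp (-(δ*k+1)) := by ring
      _ ≤ (200*c*(s*c - δ*k)) * Real.exp (-(δ*k+1)) :=
          mul_le_mul_of_nonneg_right h2 (le_of_lt hQpos)
      _ = 200*c*Real.exp (-(δ*k+1))*(s*c - δ*k) := by ring
  have hQ' : Real.exp (-(δ*k+1)) ≤ Real.exp (-(δ*α)) := Real.exp_le_exp.mpr (by linarith)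
  have hRHS : 200*α*Real.exp (-(δ*α)) * ((s*c - δ*k)*s) = 200*k*c*Real.exp (-(δ*α))*(s*c - δ*k) := by
    linear_combination 200*Real.exp (-(δ*α))*(s*c - δ*k)*hαs
  rw [hRHS]
  have final : 200*k*c*Real.exp (-(δ*k+1))*(s*c - δ*k) ≤ 200*k*c*Real.exp (-(δ*α))*(s*c - δ*k) := by
    have h := mul_le_mul_of_nonneg_right
      (mul_le_mul_of_nonneg_left hQ' (by positivity : (0:ℝ) ≤ 200*k*c)) (le_of_lt hP)
    nlinarith [h]
  have step : 2*k*((δ*k)*c - s) ≤ 200*k*c*Real.exp (-(δ*k+1))*(s*c - δ*k) := by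
    have h := mul_le_mul_of_nonneg_left main (le_of_lt hk)
    nlinarith [h]
  linarith

set_option maxHeartbeats 1000000 in
/-- There are constants `C > 0`, `M > 0` such that for all `α, δ > 0` with `δα ≥ M`:
if `k > 0` solves `k·cosh(δk) = α·sinh(δk)` and `ψ(t) = C₀(e^{k(t−δ)} − e^{−k(t−δ)})`
with `C₀ > 0` normalizing `ψ` in `L²(0,δ)`, then `|ψ(0)² − 2α| ≤ C·α·e^{−δα}`. -/
theorem robin_dirichlet_eigenfunction_boundary_value :
    ∃ C > (0:ℝ), ∃ M > (0:ℝ), ∀ α δ : ℝ, 0 < α → 0 < δ → M ≤ δ * α →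
      ∀ k C₀ : ℝ, 0 < k →
        k * Real.cosh (δ * k) = α * Real.sinh (δ * k) →
        0 < C₀ →
        ∀ ψ : ℝ → ℝ,
          ψ = (fun t => C₀ * (Real.exp (k * (t - δ)) - Real.exp (-(k * (t - δ))))) →
          (∫ t in (0:ℝ)..δ, ψ t ^ 2) = 1 →
          |ψ 0 ^ 2 - 2 * α| ≤ C * α * Real.exp (-(δ * α)) := by
  refine ⟨200, by norm_num, 5, by norm_num, ?_⟩
  intro α δ hα hδ hM k C₀ hk heig hC₀ ψ hψ hnorm
  subst hψ
  have hx : 0 < δ * k := mul_pos hδ hk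
  have hk2 : (2*k) ≠ 0 := by positivity
  -- Step 1: compute the integral.
  have hcont : Continuous (fun t : ℝ => (C₀ * (Real.exp (k * (t - δ)) - Real.exp (-(k * (t - δ)))))^2) := by
    continuity
  have hderiv : ∀ t ∈ Set.uIcc (0:ℝ) δ,
      HasDerivAt (fun t => C₀^2 * (Real.exp (2*k*(t-δ))/(2*k) - Real.exp (-(2*k*(t-δ)))/(2*k) - 2*t))
        ((C₀ * (Real.exp (k * (t - δ)) - Real.exp (-(k * (t - δ)))))^2) t := by
    intro t _
    have h1 : HasDerivAt (fun t : ℝ => 2*k*(t-δ)) (2*k) t := by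
      simpa using ((hasDerivAt_id t).sub_const δ).const_mul (2*k)
    have h2 := h1.exp
    have h4 := h1.neg.exp
    have h5 := ((h2.div_const (2*k)).sub (h4.div_const (2*k))).sub ((hasDerivAt_id t).const_mul (2:ℝ))
    have h6 := h5.const_mul (C₀^2)
    refine h6.congr_deriv ?_
    symm
    have e1 : Real.exp (2*k*(t-δ)) = Real.exp (k*(t-δ)) * Real.exp (k*(t-δ)) := by
      rw [← Real.exp_add]; ring_nf
    have e2 : Real.exp (-(2*k*(t-δ))) = Real.exp (-(k*(t-δ))) * Real.exp (-(k*(t-δ))) := by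
      rw [← Real.exp_add]; ring_nf
    have e3 : Real.exp (k*(t-δ)) * Real.exp (-(k*(t-δ))) = 1 := by
      rw [← Real.exp_add]; simp
    simp only [Pi.neg_apply, mul_neg, neg_div, mul_div_assoc, div_self hk2, mul_one]
    linear_combination (-(C₀^2))*e1 - (C₀^2)*e2 - (2*C₀^2)*e3
  have hint := intervalIntegral.integral_eq_sub_of_hasDerivAt hderiv (hcont.intervalIntegrable 0 δ)
  have hnorm' : (C₀^2 * (Real.exp (2*k*(δ-δ))/(2*k) - Real.exp (-(2*k*(δ-δ)))/(2*k) - 2*δ))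
      - (C₀^2 * (Real.exp (2*k*((0:ℝ)-δ))/(2*k) - Real.exp (-(2*k*((0:ℝ)-δ)))/(2*k) - 2*0)) = 1 := by
    rw [← hint]; exact hnorm
  have hnorm'' : C₀^2 * ((Real.exp (2*(δ*k)) - Real.exp (-(2*(δ*k))))/(2*k) - 2*δ) = 1 := by
    rw [← hnorm']
    rw [show 2*k*(δ-δ) = 0 by ring, show 2*k*((0:ℝ)-δ) = -(2*(δ*k)) by ring,
      show -(-(2*(δ*k))) = 2*(δ*k) by ring, neg_zero, Real.exp_zero]
    ring
  have hsc4 : Real.exp (2*(δ*k)) - Real.exp (-(2*(δ*k)))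
      = 4*(Real.sinh (δ*k) * Real.cosh (δ*k)) := by
    rw [Real.sinh_eq, Real.cosh_eq]
    have h2 : Real.exp (2*(δ*k)) = Real.exp (δ*k) * Real.exp (δ*k) := by rw [← Real.exp_add]; ring_nf
    have h3 : Real.exp (-(2*(δ*k))) = Real.exp (-(δ*k)) * Real.exp (-(δ*k)) := by rw [← Real.exp_add]; ring_nf
    rw [h2, h3]; ring
  have hC2 : C₀^2 * (4*(Real.sinh (δ*k) * Real.cosh (δ*k)) - 4*(δ*k)) = 2*k := by
    rw [hsc4] at hnorm''
    field_simp at hnorm''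
    linear_combination hnorm''
  -- Step 2: value at 0
  have hψ0 : (fun t => C₀ * (Real.exp (k * (t - δ)) - Real.exp (-(k * (t - δ))))) 0
      = -(2*C₀*Real.sinh (δ*k)) := by
    simp only
    rw [show k * ((0:ℝ) - δ) = -(δ*k) by ring, show -(-(δ*k)) = δ*k by ring, Real.sinh_eq]
    ring
  rw [hψ0]
  exact robin_aux α δ k C₀ (Real.sinh (δ*k)) (Real.cosh (δ*k)) hα hδ hM hk
    (Real.sinh_pos_iff.mpr hx) (Real.one_le_cosh _) (Real.self_lt_sinh_iff.mpr hx)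
    (Real.cosh_sub_sinh _) (Real.cosh_add_sinh _) (Real.cosh_sq _) heig hC2
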